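/- Assume: consistency for a=0 and a=2; conditional mean exchangeability over A in the trial for a=0 and trial positivity P(A=0|X=x,S=1)>0; conditional exchangeability over A in the external data for a=0 and a=2 with external treatment positivity P(A=0|X=x,S=0)>0 and P(A=2|X=x,S=0)>0; external-source positivity P(S=0|X=x)>0 for x with P(X=x,S=1)>0; and transportability of conditional difference effect measures: E[Yᵃ − Yᵃ' | X=x, S=1] = E[Yᵃ − Yᵃ' | X=x, S=0] for (a,a') = (2,0) whenever both P(X=x,S=1)>0 and P(X=x,S=0)>0. Then E[Y² | S=1] = λ := γ_{0,2} + (γ_{1,0} − γ_{0,0}), where γ_{s,a} = Σ_x E[Y|X=x,S=s,A=a]·P(X=x|S=1). -/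

import Mathlib

open Finset
open scoped Classical

noncomputable def pr {Ω : Type*} [Fintype Ω] (P : Ω → ℝ) (E : Ω → Prop) : ℝ :=
  ∑ ω, if E ω then P ω else 0

noncomputable def cexp {Ω : Type*} [Fintype Ω] (P : Ω → ℝ) (Y : Ω → ℝ) (E : Ω → Prop) : ℝ :=
  (∑ ω, if E ω then Y ω * P ω else 0) / pr P E

noncomputable def cpr {Ω : Type*} [Fintype Ω] (P : Ω → ℝ) (E F : Ω → Prop) : ℝ :=
  pr P (fun ω => E ω ∧ F ω) / pr P F

section Aux
variable {Ω : Type*} [Fintype Ω]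

lemma pr_nonneg' (P : Ω → ℝ) (hP : ∀ ω, 0 ≤ P ω) (E : Ω → Prop) : 0 ≤ pr P E := by
  apply Finset.sum_nonneg
  intro ω _
  by_cases h : E ω <;> simp [h, hP ω]

lemma pr_zero_term' (P : Ω → ℝ) (hP : ∀ ω, 0 ≤ P ω) (E : Ω → Prop)
    (h : pr P E = 0) (ω : Ω) (hω : E ω) : P ω = 0 := by
  have := (Finset.sum_eq_zero_iff_of_nonneg
    (fun ω _ => by by_cases h : E ω <;> simp [h, hP ω])).mp h ω (mem_univ ω)
  simpa [hω] using this

lemma pr_pos_of_cpr_pos' (P : Ω → ℝ) (hP : ∀ ω, 0 ≤ P ω) (E F : Ω → Prop)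
    (h : 0 < cpr P E F) : 0 < pr P (fun ω => E ω ∧ F ω) := by
  by_contra hc
  push_neg at hc
  have h0 : pr P (fun ω => E ω ∧ F ω) = 0 := le_antisymm hc (pr_nonneg' P hP _)
  rw [cpr, h0, zero_div] at h
  exact lt_irrefl 0 h

lemma pr_congr' (P : Ω → ℝ) {E F : Ω → Prop} (h : ∀ ω, E ω ↔ F ω) : pr P E = pr P F := by
  unfold pr
  exact Finset.sum_congr rfl (fun ω _ => by simp [h ω])

lemma cexp_congr' (P : Ω → ℝ) {f g : Ω → ℝ} {E : Ω → Prop} (h : ∀ ω, E ω → f ω = g ω) :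
    cexp P f E = cexp P g E := by
  unfold cexp
  congr 1
  refine Finset.sum_congr rfl (fun ω _ => ?_)
  by_cases hω : E ω <;> simp [hω]
  exact Or.inl (h ω hω)

lemma cexp_sub' (P : Ω → ℝ) (f g : Ω → ℝ) (E : Ω → Prop) :
    cexp P (fun ω => f ω - g ω) E = cexp P f E - cexp P g E := by
  unfold cexp
  rw [← sub_div]
  congr 1
  rw [← Finset.sum_sub_distrib]
  refine Finset.sum_congr rfl (fun ω _ => ?_)
  by_cases hω : E ω <;> simp [hω]
  ring

lemma total_exp' (P : Ω → ℝ) (hP : ∀ ω, 0 ≤ P ω) {𝓧 : Type*} [Fintype 𝓧]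
    (X : Ω → 𝓧) (f : Ω → ℝ) (E : Ω → Prop) (hE : 0 < pr P E) :
    cexp P f E = ∑ x ∈ univ.filter (fun x => 0 < pr P (fun ω => X ω = x ∧ E ω)),
      cexp P f (fun ω => X ω = x ∧ E ω) * (pr P (fun ω => X ω = x ∧ E ω) / pr P E) := by
  classical
  have hd : pr P E ≠ 0 := ne_of_gt hE
  have key : ∀ x ∈ univ.filter (fun x => 0 < pr P (fun ω => X ω = x ∧ E ω)),
      cexp P f (fun ω => X ω = x ∧ E ω) * (pr P (fun ω => X ω = x ∧ E ω) / pr P E)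
      = (∑ ω, if X ω = x ∧ E ω then f ω * P ω else 0) / pr P E := by
    intro x hx
    rw [mem_filter] at hx
    have hx' : pr P (fun ω => X ω = x ∧ E ω) ≠ 0 := ne_of_gt hx.2
    rw [cexp]
    field_simp
  rw [Finset.sum_congr rfl key, ← Finset.sum_div]
  have hz : (∑ x ∈ univ.filter (fun x => 0 < pr P (fun ω => X ω = x ∧ E ω)),
      (∑ ω, if X ω = x ∧ E ω then f ω * P ω else 0))
      = ∑ x : 𝓧, (∑ ω, if X ω = x ∧ E ω then f ω * P ω else 0) := by
    apply Finset.sum_subset (filter_subset _ _)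
    intro x _ hx
    rw [mem_filter] at hx
    push_neg at hx
    have h0 : pr P (fun ω => X ω = x ∧ E ω) = 0 :=
      le_antisymm (by simpa using hx (mem_univ x)) (pr_nonneg' P hP _)
    apply Finset.sum_eq_zero
    intro ω _
    by_cases hω : X ω = x ∧ E ω
    · simp [hω, pr_zero_term' P hP _ h0 ω hω]
    · simp [hω]
  rw [hz, Finset.sum_comm]
  unfold cexp
  congr 1
  refine Finset.sum_congr rfl (fun ω _ => ?_)
  by_cases hE' : E ω
  · simp [hE', Finset.sum_ite_eq]
  · simp [hE']

end Aux

theorem stmt7    {Ω 𝓧 : Type*} [Fintype Ω] [Fintype 𝓧]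
    (P : Ω → ℝ) (hP : ∀ ω, 0 ≤ P ω) (hPsum : ∑ ω, P ω = 1)
    (X : Ω → 𝓧) (S : Ω → ℕ) (A : Ω → ℕ) (Y : Ω → ℝ)
    (Y0 Y2 : Ω → ℝ)
    (hS1 : 0 < pr P (fun ω => S ω = 1))
    (hcons0 : ∀ ω, A ω = 0 → Y0 ω = Y ω)
    (hcons2 : ∀ ω, A ω = 2 → Y2 ω = Y ω)
    (hexch0 : ∀ x, 0 < pr P (fun ω => X ω = x ∧ S ω = 1) → cexp P Y0 (fun ω => X ω = x ∧ S ω = 1) = cexp P Y0 (fun ω => X ω = x ∧ S ω = 1 ∧ A ω = 0))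
    (hpos0 : ∀ x, 0 < pr P (fun ω => X ω = x ∧ S ω = 1) → 0 < cpr P (fun ω => A ω = 0) (fun ω => X ω = x ∧ S ω = 1))
    (hexchext0 : ∀ x, 0 < pr P (fun ω => X ω = x ∧ S ω = 0) → cexp P Y0 (fun ω => X ω = x ∧ S ω = 0) = cexp P Y0 (fun ω => X ω = x ∧ S ω = 0 ∧ A ω = 0))
    (hexchext2 : ∀ x, 0 < pr P (fun ω => X ω = x ∧ S ω = 0) → cexp P Y2 (fun ω => X ω = x ∧ S ω = 0) = cexp P Y2 (fun ω => X ω = x ∧ S ω = 0 ∧ A ω = 2))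
    (hposext0 : ∀ x, 0 < pr P (fun ω => X ω = x ∧ S ω = 0) → 0 < cpr P (fun ω => A ω = 0) (fun ω => X ω = x ∧ S ω = 0))
    (hposext2 : ∀ x, 0 < pr P (fun ω => X ω = x ∧ S ω = 0) → 0 < cpr P (fun ω => A ω = 2) (fun ω => X ω = x ∧ S ω = 0))
    (hextpos : ∀ x, 0 < pr P (fun ω => X ω = x ∧ S ω = 1) → 0 < cpr P (fun ω => S ω = 0) (fun ω => X ω = x))
    (htransdiff : ∀ x, 0 < pr P (fun ω => X ω = x ∧ S ω = 1) → 0 < pr P (fun ω => X ω = x ∧ S ω = 0) →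
      cexp P (fun ω => Y2 ω - Y0 ω) (fun ω => X ω = x ∧ S ω = 1) =
      cexp P (fun ω => Y2 ω - Y0 ω) (fun ω => X ω = x ∧ S ω = 0))
    : cexp P Y2 (fun ω => S ω = 1) =
      (∑ x ∈ univ.filter (fun x => 0 < pr P (fun ω => X ω = x ∧ S ω = 1)),
        cexp P Y (fun ω => X ω = x ∧ S ω = 0 ∧ A ω = 2) * (pr P (fun ω => X ω = x ∧ S ω = 1) / pr P (fun ω => S ω = 1))) +
      ((∑ x ∈ univ.filter (fun x => 0 < pr P (fun ω => X ω = x ∧ S ω = 1)),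
        cexp P Y (fun ω => X ω = x ∧ S ω = 1 ∧ A ω = 0) * (pr P (fun ω => X ω = x ∧ S ω = 1) / pr P (fun ω => S ω = 1))) -
      (∑ x ∈ univ.filter (fun x => 0 < pr P (fun ω => X ω = x ∧ S ω = 1)),
        cexp P Y (fun ω => X ω = x ∧ S ω = 0 ∧ A ω = 0) * (pr P (fun ω => X ω = x ∧ S ω = 1) / pr P (fun ω => S ω = 1)))) := by
  classical
  have hkey : ∀ x ∈ univ.filter (fun x => 0 < pr P (fun ω => X ω = x ∧ S ω = 1)),
      cexp P Y2 (fun ω => X ω = x ∧ S ω = 1) =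
      cexp P Y (fun ω => X ω = x ∧ S ω = 0 ∧ A ω = 2) +
      (cexp P Y (fun ω => X ω = x ∧ S ω = 1 ∧ A ω = 0) -
       cexp P Y (fun ω => X ω = x ∧ S ω = 0 ∧ A ω = 0)) := by
    intro x hx
    rw [mem_filter] at hx
    have h1 := hx.2
    have hx0 : 0 < pr P (fun ω => X ω = x ∧ S ω = 0) := by
      have h := pr_pos_of_cpr_pos' P hP _ _ (hextpos x h1)
      rwa [show pr P (fun ω => S ω = 0 ∧ X ω = x) = pr P (fun ω => X ω = x ∧ S ω = 0) from
        pr_congr' P fun ω => and_comm] at h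
    have hY0trial : cexp P Y0 (fun ω => X ω = x ∧ S ω = 1)
        = cexp P Y (fun ω => X ω = x ∧ S ω = 1 ∧ A ω = 0) := by
      rw [hexch0 x h1]
      exact cexp_congr' P (fun ω hω => hcons0 ω hω.2.2)
    have hY0ext : cexp P Y0 (fun ω => X ω = x ∧ S ω = 0)
        = cexp P Y (fun ω => X ω = x ∧ S ω = 0 ∧ A ω = 0) := by
      rw [hexchext0 x hx0]
      exact cexp_congr' P (fun ω hω => hcons0 ω hω.2.2)
    have hY2ext : cexp P Y2 (fun ω => X ω = x ∧ S ω = 0)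
        = cexp P Y (fun ω => X ω = x ∧ S ω = 0 ∧ A ω = 2) := by
      rw [hexchext2 x hx0]
      exact cexp_congr' P (fun ω hω => hcons2 ω hω.2.2)
    have htd := htransdiff x h1 hx0
    rw [cexp_sub', cexp_sub'] at htd
    linarith
  rw [total_exp' P hP X Y2 (fun ω => S ω = 1) hS1]
  rw [Finset.sum_congr rfl (fun x hx => by rw [hkey x hx])]
  rw [← Finset.sum_sub_distrib, ← Finset.sum_add_distrib]
  exact Finset.sum_congr rfl fun x _ => by ring
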